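/- Let J ⊆ K[x_1,...,x_n] be a squarefree monomial ideal all of whose minimal monomial generators have degree 3, and let m^[3] be the ideal generated by all squarefree monomials of degree 3. Then the following are equivalent: (a) J ∩ (m^[3])^t = J·(m^[3])^{t-1} for all t ≥ 1; (b) for every minimal generator x_{i_1} x_{i_2} x_{i_3} of J and every 2-element subset G ⊆ [n], at least one of the squarefree monomials x_{G ∪ {i_1}}, x_{G ∪ {i_2}}, x_{G ∪ {i_3}} belongs to J. -/

import Mathlib

open MvPolynomial Finset Pointwise

/-- The squarefree `d`-th power `m^[d]` of `m = (x_1,…,x_n)`: the ideal of `K[x_1,…,x_n]`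
generated by all squarefree monomials of degree `d`. -/
noncomputable def sqfreePower (K : Type) [Field K] (n d : ℕ) : Ideal (MvPolynomial (Fin n) K) :=
  Ideal.span {p | ∃ F : Finset (Fin n), F.card = d ∧ p = ∏ i ∈ F, MvPolynomial.X i}

variable {n : ℕ}

noncomputable def indF (F : Finset (Fin n)) : Fin n →₀ ℕ := ∑ i ∈ F, Finsupp.single i 1

lemma indF_apply (F : Finset (Fin n)) (i : Fin n) : indF F i = if i ∈ F then 1 else 0 := by
  classical
  simp [indF, Finsupp.finset_sum_apply, Finsupp.single_apply, Finset.sum_ite_eq' F i (fun _ => 1)]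

lemma indF_le_iff {F : Finset (Fin n)} {d : Fin n →₀ ℕ} : indF F ≤ d ↔ ∀ i ∈ F, 1 ≤ d i := by
  rw [Finsupp.le_def]
  constructor
  · intro h i hi; have := h i; rwa [indF_apply, if_pos hi] at this
  · intro h i; rw [indF_apply]; split
    · exact h i ‹_›
    · exact Nat.zero_le _

lemma indF_insert {F : Finset (Fin n)} {x : Fin n} (hx : x ∉ F) :
    indF (insert x F) = Finsupp.single x 1 + indF F := by
  rw [indF, Finset.sum_insert hx]; rfl

lemma prod_X_eq_monomial_indF {K : Type} [Field K] (F : Finset (Fin n)) :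
    (∏ i ∈ F, (X i : MvPolynomial (Fin n) K)) = monomial (indF F) 1 := by
  classical
  induction F using Finset.induction with
  | empty => simp [indF]
  | insert _ _ h ih =>
    rw [Finset.prod_insert h, ih, indF_insert h, X, monomial_mul, one_mul]

lemma indF_le_indF {F E : Finset (Fin n)} : indF F ≤ indF E ↔ F ⊆ E := by
  rw [indF_le_iff]
  constructor
  · intro h i hi; have := h i hi; rw [indF_apply] at this
    by_contra hc; rw [if_neg hc] at this; omega
  · intro h i hi; rw [indF_apply, if_pos (h hi)]

def Pw (n t : ℕ) : Set (Fin n →₀ ℕ) :=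
  {d | ∃ T : Fin t → Finset (Fin n), (∀ j, (T j).card = 3) ∧ d = ∑ j, indF (T j)}

variable {K : Type} [Field K]

lemma mono_mem_span {A : Set (Fin n →₀ ℕ)} {e : Fin n →₀ ℕ} :
    (monomial e (1:K)) ∈ Ideal.span ((fun d => monomial d (1:K)) '' A) ↔ ∃ a ∈ A, a ≤ e := by
  rw [mem_ideal_span_monomial_image]
  simp [support_monomial]

lemma span_image_mul (A B : Set (Fin n →₀ ℕ)) :
    Ideal.span ((fun d => monomial d (1:K)) '' A) * Ideal.span ((fun d => monomial d (1:K)) '' B)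
      = Ideal.span ((fun d => monomial d (1:K)) '' (A + B)) := by
  rw [Ideal.span_mul_span']
  congr 1
  ext p
  constructor
  · rintro ⟨a, ⟨da, hda, rfl⟩, b, ⟨db, hdb, rfl⟩, rfl⟩
    exact ⟨da + db, ⟨da, hda, db, hdb, rfl⟩, by simp [monomial_mul]⟩
  · rintro ⟨d, ⟨da, hda, db, hdb, rfl⟩, rfl⟩
    exact ⟨monomial da 1, ⟨da, hda, rfl⟩, monomial db 1, ⟨db, hdb, rfl⟩,
      by simp [monomial_mul]⟩

lemma Pw_succ (t : ℕ) : Pw n (t + 1) = Pw n t + Pw n 1 := by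
  ext d
  constructor
  · rintro ⟨T, hT, rfl⟩
    refine ⟨∑ j : Fin t, indF (T j.castSucc), ⟨fun j => T j.castSucc, fun j => hT _, rfl⟩,
      indF (T (Fin.last t)), ⟨fun _ => T (Fin.last t), fun _ => hT _, by simp⟩, ?_⟩
    rw [Fin.sum_univ_castSucc]
  · rintro ⟨a, ⟨T, hT, rfl⟩, b, ⟨T1, hT1, rfl⟩, rfl⟩
    refine ⟨Fin.snoc T (T1 0), fun j => ?_, ?_⟩
    · induction j using Fin.lastCases with
      | last => simp [Fin.snoc_last]; exact hT1 0
      | cast j => simp [Fin.snoc_castSucc]; exact hT j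
    · simp [Fin.sum_univ_castSucc, Fin.snoc_last, Fin.snoc_castSucc]

lemma sqfreePower_eq : sqfreePower K n 3 = Ideal.span ((fun d => monomial d (1:K)) '' Pw n 1) := by
  unfold sqfreePower
  congr 1
  ext p
  constructor
  · rintro ⟨F, hF, rfl⟩
    exact ⟨indF F, ⟨fun _ => F, fun _ => hF, by simp⟩, (prod_X_eq_monomial_indF F).symm⟩
  · rintro ⟨d, ⟨T, hT, rfl⟩, rfl⟩
    refine ⟨T 0, hT 0, ?_⟩
    rw [prod_X_eq_monomial_indF]
    congr 1
    simp

lemma sqfreePower_pow (t : ℕ) :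
    (sqfreePower K n 3) ^ t = Ideal.span ((fun d => monomial d (1:K)) '' Pw n t) := by
  induction t with
  | zero =>
    rw [pow_zero, Ideal.one_eq_top]
    symm
    rw [Ideal.eq_top_iff_one]
    apply Ideal.subset_span
    refine ⟨0, ⟨fun j => j.elim0, fun j => j.elim0, by simp⟩, by simp⟩
  | succ t ih =>
    rw [pow_succ, ih, sqfreePower_eq, span_image_mul, ← Pw_succ]

lemma L2 {t : ℕ} {c : Fin n →₀ ℕ} (T : Fin t → Finset (Fin n)) (h3 : ∀ j, (T j).card = 3)
    (hle : ∑ j, indF (T j) ≤ c) : 3 * t ≤ ∑ i, min (c i) t := by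
  have key : ∀ i, (∑ j, indF (T j)) i = ∑ j, indF (T j) i := fun i =>
    Finsupp.finset_sum_apply _ _ _
  have h1 : ∀ i : Fin n, (∑ j, indF (T j)) i ≤ min (c i) t := by
    intro i
    refine le_min (Finsupp.le_def.mp hle i) ?_
    rw [key]
    calc ∑ j, indF (T j) i ≤ ∑ j : Fin t, 1 := by
          refine Finset.sum_le_sum fun j _ => ?_
          rw [indF_apply]; split <;> omega
      _ = t := by simp
  calc 3 * t = ∑ i, (∑ j, indF (T j)) i := by
        simp only [key]
        rw [Finset.sum_comm]
        have : ∀ j : Fin t, ∑ i, indF (T j) i = 3 := by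
          intro j
          simp only [indF_apply]
          rw [Finset.sum_ite_mem, Finset.univ_inter]
          simp [h3 j]
        rw [Finset.sum_congr rfl fun j _ => this j]
        simp [mul_comm]
    _ ≤ ∑ i, min (c i) t := Finset.sum_le_sum fun i _ => h1 i

lemma L1 : ∀ (t : ℕ) (c : Fin n →₀ ℕ), 3 * t ≤ ∑ i, min (c i) t →
    ∃ T : Fin t → Finset (Fin n), (∀ j, (T j).card = 3) ∧ ∑ j, indF (T j) ≤ c := by
  intro t
  induction t with
  | zero => exact fun c _ => ⟨fun j => j.elim0, fun j => j.elim0, by simp⟩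
  | succ t ih =>
    intro c hc
    classical
    set A := Finset.univ.filter (fun i => t + 1 ≤ c i) with hA
    set Pos := Finset.univ.filter (fun i => 1 ≤ c i) with hPos
    have hAPos : A ⊆ Pos := by
      intro i hi
      simp only [hA, hPos, Finset.mem_filter, Finset.mem_univ, true_and] at *
      omega
    have hPos3 : 3 ≤ Pos.card := by
      have h0 : ∑ i, min (c i) (t+1) = ∑ i ∈ Pos, min (c i) (t+1) := by
        symm
        apply Finset.sum_subset (Finset.subset_univ Pos)
        intro x _ hx
        simp only [hPos, Finset.mem_filter, Finset.mem_univ, true_and] at hx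
        omega
      have h1 : ∑ i ∈ Pos, min (c i) (t+1) ≤ ∑ i ∈ Pos, (t+1) :=
        Finset.sum_le_sum fun i _ => min_le_right _ _
      rw [Finset.sum_const, smul_eq_mul] at h1
      rw [h0] at hc
      have := le_trans hc h1
      by_contra hcon
      push_neg at hcon
      interval_cases h : Pos.card <;> omega
    obtain ⟨T₀, hT₀Pos, hT₀A, hT₀card⟩ :
        ∃ T₀ : Finset (Fin n), T₀ ⊆ Pos ∧ (A ⊆ T₀ ∨ T₀ ⊆ A) ∧ T₀.card = 3 := by
      by_cases h3 : 3 ≤ A.card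
      · obtain ⟨T₀, hsub, hcard⟩ := Finset.exists_subset_card_eq h3
        exact ⟨T₀, hsub.trans hAPos, Or.inr hsub, hcard⟩
      · obtain ⟨T₀, h1, h2, h3'⟩ :=
          Finset.exists_subsuperset_card_eq hAPos (n := 3) (by omega) hPos3
        exact ⟨T₀, h2, Or.inl h1, by omega⟩
    have hT₀c : indF T₀ ≤ c := by
      rw [indF_le_iff]
      intro i hi
      have := hT₀Pos hi
      simp only [hPos, Finset.mem_filter] at this
      exact this.2
    have hid : ∀ i, min (c i) (t+1) =
        min ((c - indF T₀) i) t + (if i ∈ T₀ then 1 else 0) + (if i ∈ A \ T₀ then 1 else 0) := by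
      intro i
      have h1 : (c - indF T₀) i = c i - indF T₀ i := Finsupp.tsub_apply _ _ i
      rw [h1, indF_apply]
      have hiA : i ∈ A ↔ t + 1 ≤ c i := by simp [hA]
      have hiPos : i ∈ T₀ → 1 ≤ c i := fun h => by
        have := hT₀Pos h; simp only [hPos, Finset.mem_filter] at this; exact this.2
      by_cases h2 : i ∈ T₀ <;> by_cases h3 : i ∈ A <;>
        simp only [h2, h3, Finset.mem_sdiff, if_true, if_false, true_and, false_and,
          not_true, not_false_iff] <;>
        [skip; skip; skip; skip] <;>
        · first
          | (have := hiPos h2; have := hiA.mp h3; omega)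
          | (have := hiPos h2; have : ¬ (t+1 ≤ c i) := fun hh => h3 (hiA.mpr hh); omega)
          | (have := hiA.mp h3; omega)
          | (have : ¬ (t+1 ≤ c i) := fun hh => h3 (hiA.mpr hh); omega)
    have hsum : ∑ i, min (c i) (t+1) =
        (∑ i, min ((c - indF T₀) i) t) + T₀.card + (A \ T₀).card := by
      rw [Finset.sum_congr rfl fun i _ => hid i]
      rw [Finset.sum_add_distrib, Finset.sum_add_distrib]
      congr 1
      · congr 1
        rw [Finset.sum_ite_mem, Finset.univ_inter]
        simp
      · rw [Finset.sum_ite_mem, Finset.univ_inter]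
        simp
    have hrest : 3 * t ≤ ∑ i, min ((c - indF T₀) i) t := by
      rcases hT₀A with h | h
      · have : (A \ T₀).card = 0 := by
          rw [Finset.card_eq_zero, Finset.sdiff_eq_empty_iff_subset]; exact h
        omega
      · have hcardA : 3 ≤ A.card := hT₀card ▸ Finset.card_le_card h
        have hAd : (A \ T₀).card = A.card - 3 := by
          rw [Finset.card_sdiff_of_subset h, hT₀card]
        have hMA : A.card * (t+1) ≤ ∑ i, min (c i) (t+1) := by
          calc A.card * (t+1) = ∑ i ∈ A, (t+1) := by rw [Finset.sum_const, smul_eq_mul]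
            _ = ∑ i ∈ A, min (c i) (t+1) := by
                refine Finset.sum_congr rfl fun i hi => ?_
                simp only [hA, Finset.mem_filter] at hi
                omega
            _ ≤ ∑ i, min (c i) (t+1) :=
                Finset.sum_le_sum_of_subset (Finset.subset_univ A)
        obtain ⟨k, hk⟩ : ∃ k, A.card = k + 3 := ⟨A.card - 3, by omega⟩
        rw [hk] at hMA hAd
        have hnl : 3 * (t+1) + k ≤ (k+3) * (t+1) := by nlinarith
        omega
    obtain ⟨T', hT'card, hT'le⟩ := ih (c - indF T₀) hrest
    refine ⟨Fin.cons T₀ T', fun j => ?_, ?_⟩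
    · induction j using Fin.cases with
      | zero => simpa using hT₀card
      | succ j => simpa using hT'card j
    · rw [Fin.sum_univ_succ]
      simp only [Fin.cons_zero, Fin.cons_succ]
      calc indF T₀ + ∑ j, indF (T' j) ≤ indF T₀ + (c - indF T₀) :=
            add_le_add le_rfl hT'le
        _ = c := add_tsub_cancel_of_le hT₀c

lemma core {G : Set (Finset (Fin n))} (hG : ∀ F ∈ G, F.card = 3)
    (hb : ∀ F ∈ G, ∀ S : Finset (Fin n), S.card = 2 → ∃ r ∈ F, r ∉ S ∧ insert r S ∈ G)
    {t : ℕ} (ht : 2 ≤ t) {d : Fin n →₀ ℕ} {F : Finset (Fin n)} (hF : F ∈ G)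
    (hFd : indF F ≤ d) (hM : 3 * t ≤ ∑ i, min (d i) t) :
    ∃ F' ∈ G, indF F' ≤ d ∧ 3 * (t-1) ≤ ∑ i, min ((d - indF F') i) (t-1) := by
  classical
  set A := Finset.univ.filter (fun i => t ≤ d i) with hA
  have hiA : ∀ i, i ∈ A ↔ t ≤ d i := by intro i; simp [hA]
  have key : ∀ F'' : Finset (Fin n), indF F'' ≤ d → F''.card = 3 →
      (A \ F'').card + 3 * t ≤ ∑ i, min (d i) t →
      3 * (t-1) ≤ ∑ i, min ((d - indF F'') i) (t-1) := by
    intro F'' hle hcard hbound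
    have hid : ∀ i, min (d i) t = min ((d - indF F'') i) (t-1)
        + (if i ∈ F'' then 1 else 0) + (if i ∈ A \ F'' then 1 else 0) := by
      intro i
      have h1 : (d - indF F'') i = d i - indF F'' i := Finsupp.tsub_apply _ _ i
      have h2 : i ∈ F'' → 1 ≤ d i := fun h => (indF_le_iff.mp hle) i h
      rw [h1, indF_apply]
      by_cases h3 : i ∈ F''
      · have hd1 := h2 h3
        by_cases h4 : i ∈ A
        · have := (hiA i).mp h4
          have hmem : i ∉ A \ F'' := fun hh => (Finset.mem_sdiff.mp hh).2 h3
          rw [if_pos h3, if_neg hmem]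
          omega
        · have hh : ¬ t ≤ d i := fun hh => h4 ((hiA i).mpr hh)
          have hmem : i ∉ A \ F'' := fun hh2 => h4 (Finset.mem_sdiff.mp hh2).1
          rw [if_pos h3, if_neg hmem]
          omega
      · by_cases h4 : i ∈ A
        · have := (hiA i).mp h4
          have hmem : i ∈ A \ F'' := Finset.mem_sdiff.mpr ⟨h4, h3⟩
          rw [if_neg h3, if_pos hmem]
          omega
        · have hh : ¬ t ≤ d i := fun hh => h4 ((hiA i).mpr hh)
          have hmem : i ∉ A \ F'' := fun hh2 => h4 (Finset.mem_sdiff.mp hh2).1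
          rw [if_neg h3, if_neg hmem]
          omega
    have hsum : ∑ i, min (d i) t =
        (∑ i, min ((d - indF F'') i) (t-1)) + F''.card + (A \ F'').card := by
      rw [Finset.sum_congr rfl fun i _ => hid i]
      rw [Finset.sum_add_distrib, Finset.sum_add_distrib]
      congr 1
      · congr 1
        rw [Finset.sum_ite_mem, Finset.univ_inter]
        simp
      · rw [Finset.sum_ite_mem, Finset.univ_inter]
        simp
    omega
  by_cases hc : (A \ F).card + 3 * t ≤ ∑ i, min (d i) t
  · exact ⟨F, hF, hFd, key F hFd (hG F hF) hc⟩
  · -- derive A.card ≤ 2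
    have hMsplit : ∑ i, min (d i) t = t * A.card + ∑ i ∈ Finset.univ \ A, d i := by
      rw [← Finset.sum_sdiff (Finset.subset_univ A), add_comm]
      congr 1
      · rw [show t * A.card = ∑ i ∈ A, t by rw [Finset.sum_const, smul_eq_mul, mul_comm]]
        refine Finset.sum_congr rfl fun i hi => ?_
        have := (hiA i).mp hi
        omega
      · refine Finset.sum_congr rfl fun i hi => ?_
        have : ¬ t ≤ d i := by
          intro hh
          exact (Finset.mem_sdiff.mp hi).2 ((hiA i).mpr hh)
        omega
    have hsF : (F \ A).card ≤ ∑ i ∈ Finset.univ \ A, d i := by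
      calc (F \ A).card = ∑ i ∈ F \ A, 1 := by simp
        _ ≤ ∑ i ∈ F \ A, d i := by
            refine Finset.sum_le_sum fun i hi => ?_
            exact (indF_le_iff.mp hFd) i (Finset.mem_sdiff.mp hi).1
        _ ≤ ∑ i ∈ Finset.univ \ A, d i := by
            refine Finset.sum_le_sum_of_subset ?_
            exact Finset.sdiff_subset_sdiff (Finset.subset_univ F) le_rfl
    have hFA : (F ∩ A).card + (F \ A).card = F.card := Finset.card_inter_add_card_sdiff F A
    have hAF : (A ∩ F).card + (A \ F).card = A.card := Finset.card_inter_add_card_sdiff A F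
    have hAFcomm : (A ∩ F).card = (F ∩ A).card := by rw [Finset.inter_comm]
    have hFcard := hG F hF
    have hA2 : A.card ≤ 2 := by
      by_contra hcon
      push_neg at hcon
      obtain ⟨k, hk⟩ : ∃ k, A.card = k + 3 := ⟨A.card - 3, by omega⟩
      apply hc
      have hkk : k ≤ t * k := Nat.le_mul_of_pos_left k (by omega)
      have hmul2 : t * A.card = t * k + 3 * t := by rw [hk]; ring
      rw [hMsplit, hmul2]
      omega
    -- A.card ≤ 2; find F' using hb
    have htri : A.card = 0 ∨ A.card = 1 ∨ A.card = 2 := by omega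
    rcases htri with hAc | hAc | hAc
    · exfalso
      apply hc
      have : A = ∅ := Finset.card_eq_zero.mp hAc
      rw [this]
      simpa using hM
    · obtain ⟨α, hα⟩ := Finset.card_eq_one.mp hAc
      by_cases hαF : α ∈ F
      · exfalso
        apply hc
        have : A \ F = ∅ := by
          rw [Finset.sdiff_eq_empty_iff_subset, hα]
          simpa using hαF
        rw [this]
        simpa using hM
      · obtain ⟨f₁, hf₁⟩ := Finset.card_pos.mp (by omega : 0 < F.card)
        have hne : α ≠ f₁ := fun h => hαF (h ▸ hf₁)
        have hS2 : ({α, f₁} : Finset (Fin n)).card = 2 := Finset.card_pair hne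
        obtain ⟨r, hrF, hrS, hFG'⟩ := hb F hF {α, f₁} hS2
        have hFd'' : indF (insert r {α, f₁}) ≤ d := by
          rw [indF_le_iff]
          intro i hi
          rcases Finset.mem_insert.mp hi with h | h
          · exact (indF_le_iff.mp hFd) i (h ▸ hrF)
          · rcases Finset.mem_insert.mp h with h' | h'
            · have hiAm : i ∈ A := by rw [hα]; exact Finset.mem_singleton.mpr h'
              have : t ≤ d i := (hiA i).mp hiAm
              omega
            · rw [Finset.mem_singleton.mp h']
              exact (indF_le_iff.mp hFd) f₁ hf₁
        refine ⟨insert r {α, f₁}, hFG', hFd'', ?_⟩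
        apply key _ hFd'' (hG _ hFG')
        have : A \ insert r {α, f₁} = ∅ := by
          rw [Finset.sdiff_eq_empty_iff_subset, hα]
          intro x hx
          rw [Finset.mem_singleton.mp hx]
          exact Finset.mem_insert.mpr (Or.inr (Finset.mem_insert_self α _))
        rw [this]
        simpa using hM
    · -- A.card = 2
      obtain ⟨r, hrF, hrS, hFG'⟩ := hb F hF A hAc
      have hFd' : indF (insert r A) ≤ d := by
        rw [indF_le_iff]
        intro i hi
        rcases Finset.mem_insert.mp hi with h | h
        · exact (indF_le_iff.mp hFd) i (h ▸ hrF)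
        · have : t ≤ d i := (hiA i).mp h
          omega
      refine ⟨insert r A, hFG', hFd', ?_⟩
      apply key _ hFd' (hG _ hFG')
      have : A \ insert r A = ∅ := by
        rw [Finset.sdiff_eq_empty_iff_subset]
        exact Finset.subset_insert r A
      rw [this]
      simpa using hM
/-- Let `J` be a squarefree monomial ideal of `K[x_1,…,x_n]` all of
whose minimal generators have degree `3` (so `J` is spanned by the squarefree monomials
`x_F`, `F ∈ G`, with all `|F| = 3`).  The following are equivalent:
(a) `J ∩ (m^[3])^t = J·(m^[3])^{t-1}` for all `t ≥ 1` (vanishing of `VV_{J ⊆ m^[3]}`);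
(b) for every minimal generator `x_F` (`F ∈ G`) and every `2`-subset `S ⊆ [n]`, some
`r ∈ F` satisfies `x_{S ∪ {r}} ∈ J`. -/
theorem sqfree_deg3_VV_vanishes_iff {K : Type} [Field K] {n : ℕ}
    (G : Set (Finset (Fin n))) (hG : ∀ F ∈ G, F.card = 3)
    (J : Ideal (MvPolynomial (Fin n) K))
    (hJ : J = Ideal.span {p | ∃ F ∈ G, p = ∏ i ∈ F, MvPolynomial.X i}) :
    (∀ t : ℕ, 1 ≤ t →
        J ⊓ (sqfreePower K n 3) ^ t = J * (sqfreePower K n 3) ^ (t - 1)) ↔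
      (∀ F ∈ G, ∀ S : Finset (Fin n), S.card = 2 →
        ∃ r ∈ F, (∏ i ∈ insert r S, MvPolynomial.X i) ∈ J) := by
  classical
  have hJ' : J = Ideal.span ((fun d => monomial d (1:K)) '' {d | ∃ F ∈ G, d = indF F}) := by
    rw [hJ]
    congr 1
    ext p
    simp only [Set.mem_setOf_eq, Set.mem_image]
    constructor
    · rintro ⟨F, hF, rfl⟩
      exact ⟨indF F, ⟨F, hF, rfl⟩, (prod_X_eq_monomial_indF F).symm⟩
    · rintro ⟨d, ⟨F, hF, rfl⟩, rfl⟩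
      exact ⟨F, hF, (prod_X_eq_monomial_indF F).symm⟩
  constructor
  · -- (a) → (b)
    intro ha F hF S hS
    have hFcard := hG F hF
    by_cases hSS : S ⊆ F
    · -- S ⊆ F : take the third element
      have hFS1 : (F \ S).card = 1 := by rw [Finset.card_sdiff_of_subset hSS, hFcard, hS]
      obtain ⟨r, hr⟩ := Finset.card_eq_one.mp hFS1
      have hrFS : r ∈ F \ S := hr ▸ Finset.mem_singleton_self r
      have hrF : r ∈ F := (Finset.mem_sdiff.mp hrFS).1
      have hrS : r ∉ S := (Finset.mem_sdiff.mp hrFS).2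
      have heq : insert r S = F := by
        apply Finset.eq_of_subset_of_card_le
        · intro x hx
          rcases Finset.mem_insert.mp hx with h | h
          · exact h ▸ hrF
          · exact hSS h
        · rw [hFcard, Finset.card_insert_of_notMem hrS, hS]
      refine ⟨r, hrF, ?_⟩
      rw [heq, hJ]
      exact Ideal.subset_span ⟨F, hF, rfl⟩
    · -- main case
      obtain ⟨s₀, hs₀S, hs₀F⟩ := Finset.not_subset.mp hSS
      set c := (F \ S).card with hcdef
      have hFS3 : (F ∩ S).card + c = 3 := by
        rw [hcdef, Finset.card_inter_add_card_sdiff, hFcard]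
      have hFScard : (F ∩ S).card ≤ 1 := by
        have hsub : F ∩ S ⊆ S.erase s₀ := by
          intro x hx
          obtain ⟨hxF, hxS⟩ := Finset.mem_inter.mp hx
          exact Finset.mem_erase.mpr ⟨fun h => hs₀F (h ▸ hxF), hxS⟩
        calc (F ∩ S).card ≤ (S.erase s₀).card := Finset.card_le_card hsub
          _ = 1 := by rw [Finset.card_erase_of_mem hs₀S, hS]
      have hc2 : 2 ≤ c := by omega
      have hc3 : c ≤ 3 := by omega
      set e : Fin n →₀ ℕ := indF (F \ S) + 3 • indF S with hedef
      have he : ∀ i, e i = (if i ∈ F \ S then 1 else 0) + 3 * (if i ∈ S then 1 else 0) := by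
        intro i
        rw [hedef, Finsupp.add_apply, Finsupp.smul_apply, indF_apply, indF_apply, smul_eq_mul]
      have hdisjS : Disjoint S (F \ S) := Finset.disjoint_sdiff
      have hFe : indF F ≤ e := by
        rw [indF_le_iff]
        intro i hi
        rw [he i]
        by_cases h : i ∈ S
        · simp [h]
        · have : i ∈ F \ S := Finset.mem_sdiff.mpr ⟨hi, h⟩
          simp [this]
      have hmem1 : (monomial e 1 : MvPolynomial (Fin n) K) ∈ J := by
        rw [hJ', mono_mem_span]
        exact ⟨indF F, ⟨F, hF, rfl⟩, hFe⟩
      have hmem2 : (monomial e 1 : MvPolynomial (Fin n) K) ∈ sqfreePower K n 3 ^ c := by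
        rw [sqfreePower_pow, mono_mem_span]
        set ε := (F \ S).equivFin with hε
        refine ⟨∑ j : Fin c, indF (insert (↑(ε.symm j)) S),
          ⟨fun j => insert (↑(ε.symm j)) S, fun j => ?_, rfl⟩, ?_⟩
        · have hmem : (↑(ε.symm j) : Fin n) ∈ F \ S := (ε.symm j).2
          have hnotS : (↑(ε.symm j) : Fin n) ∉ S := (Finset.mem_sdiff.mp hmem).2
          rw [Finset.card_insert_of_notMem hnotS, hS]
        · rw [Finsupp.le_def]
          intro i
          have happ : (∑ j : Fin c, indF (insert (↑(ε.symm j)) S)) i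
              = ∑ j : Fin c, (if i ∈ insert (↑(ε.symm j) : Fin n) S then 1 else 0) := by
            rw [Finsupp.finset_sum_apply]
            exact Finset.sum_congr rfl fun j _ => indF_apply _ i
          rw [happ, he i]
          by_cases hiS : i ∈ S
          · calc (∑ j : Fin c, if i ∈ insert (↑(ε.symm j) : Fin n) S then 1 else 0)
                ≤ ∑ j : Fin c, 1 := Finset.sum_le_sum fun j _ => by split <;> omega
              _ = c := by simp
              _ ≤ (if i ∈ F \ S then 1 else 0) + 3 * (if i ∈ S then 1 else 0) := by
                  rw [if_pos hiS]; omega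
          · by_cases hiFS : i ∈ F \ S
            · have hterm : ∀ j : Fin c, (if i ∈ insert (↑(ε.symm j) : Fin n) S then 1 else 0)
                  = if j = ε ⟨i, hiFS⟩ then 1 else 0 := by
                intro j
                by_cases h : j = ε ⟨i, hiFS⟩
                · rw [if_pos h, if_pos]
                  subst h
                  rw [Equiv.symm_apply_apply]
                  exact Finset.mem_insert_self _ _
                · rw [if_neg h, if_neg]
                  intro hmem
                  rcases Finset.mem_insert.mp hmem with h' | h'
                  · apply h
                    have hsy : ε.symm j = ⟨i, hiFS⟩ := Subtype.ext h'.symm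
                    rw [← hsy, Equiv.apply_symm_apply]
                  · exact hiS h'
              rw [Finset.sum_congr rfl fun j _ => hterm j]
              rw [Finset.sum_ite_eq' Finset.univ (ε ⟨i, hiFS⟩) (fun _ => 1)]
              rw [if_pos (Finset.mem_univ _), if_pos hiFS]
              omega
            · have hterm : ∀ j : Fin c, (if i ∈ insert (↑(ε.symm j) : Fin n) S then 1 else 0) = 0 := by
                intro j
                rw [if_neg]
                rw [Finset.mem_insert]
                rintro (h | h)
                · exact hiFS (h ▸ (ε.symm j).2)
                · exact hiS h
              rw [Finset.sum_congr rfl fun j _ => hterm j]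
              simp
      have hmemJP : (monomial e 1 : MvPolynomial (Fin n) K) ∈ J * sqfreePower K n 3 ^ (c - 1) := by
        rw [← ha c (by omega)]
        exact Submodule.mem_inf.mpr ⟨hmem1, hmem2⟩
      rw [hJ', sqfreePower_pow, span_image_mul, mono_mem_span] at hmemJP
      obtain ⟨q, hqmem, hqe⟩ := hmemJP
      obtain ⟨a, ⟨F', hF'G, rfl⟩, w, ⟨T', hT'3, rfl⟩, rfl⟩ := hqmem
      have hF'card := hG F' hF'G
      have hF'e : indF F' ≤ e := le_trans le_self_add hqe
      have hw : ∑ j, indF (T' j) ≤ e - indF F' := le_tsub_of_add_le_left hqe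
      have hF'sub : F' ⊆ S ∪ (F \ S) := by
        intro x hxF'
        have h1 : 1 ≤ e x := (indF_le_iff.mp hF'e) x hxF'
        rw [he x] at h1
        by_cases h : x ∈ S
        · exact Finset.mem_union_left _ h
        · rw [if_neg h] at h1
          by_cases h2 : x ∈ F \ S
          · exact Finset.mem_union_right _ h2
          · rw [if_neg h2] at h1; omega
      have hSF' : S ⊆ F' := by
        by_contra hnot
        obtain ⟨α, hαS, hαF'⟩ := Finset.not_subset.mp hnot
        have hL2 := L2 T' hT'3 hw
        -- upper bound on the capacity sum
        have hF'S : (F' ∩ S).card ≤ 1 := by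
          have hsub : F' ∩ S ⊆ S.erase α := by
            intro x hx
            obtain ⟨hxF', hxS⟩ := Finset.mem_inter.mp hx
            exact Finset.mem_erase.mpr ⟨fun h => hαF' (h ▸ hxF'), hxS⟩
          calc (F' ∩ S).card ≤ (S.erase α).card := Finset.card_le_card hsub
            _ = 1 := by rw [Finset.card_erase_of_mem hαS, hS]
        have hpart : (F' ∩ S).card + (F' ∩ (F \ S)).card = 3 := by
          have hun : F' ∩ S ∪ F' ∩ (F \ S) = F' := by
            rw [← Finset.inter_union_distrib_left]
            exact Finset.inter_eq_left.mpr hF'sub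
          have hd : Disjoint (F' ∩ S) (F' ∩ (F \ S)) :=
            Finset.disjoint_of_subset_left Finset.inter_subset_right
              (Finset.disjoint_of_subset_right Finset.inter_subset_right hdisjS)
          have hcardun := Finset.card_union_of_disjoint hd
          rw [hun] at hcardun
          omega
        have hF'FS2 : 2 ≤ (F' ∩ (F \ S)).card := by omega
        have hzero : ∀ x ∈ Finset.univ, x ∉ S ∪ (F \ S) →
            min ((e - indF F') x) (c - 1) = 0 := by
          intro x _ hx
          have hx1 : x ∉ S := fun h => hx (Finset.mem_union_left _ h)
          have hx2 : x ∉ F \ S := fun h => hx (Finset.mem_union_right _ h)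
          have hex : e x = 0 := by rw [he x, if_neg hx1, if_neg hx2]
          have : (e - indF F') x = 0 := by
            rw [Finsupp.tsub_apply]; omega
          simp [this]
        have hsplit : ∑ i, min ((e - indF F') i) (c - 1)
            = ∑ i ∈ S, min ((e - indF F') i) (c - 1)
              + ∑ i ∈ F \ S, min ((e - indF F') i) (c - 1) := by
          rw [← Finset.sum_union hdisjS]
          exact (Finset.sum_subset (Finset.subset_univ _) hzero).symm
        have h1 : ∑ i ∈ S, min ((e - indF F') i) (c - 1) ≤ 2 * (c - 1) := by
          calc ∑ i ∈ S, min ((e - indF F') i) (c - 1) ≤ ∑ i ∈ S, (c - 1) :=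
              Finset.sum_le_sum fun i _ => min_le_right _ _
            _ = 2 * (c - 1) := by rw [Finset.sum_const, hS, smul_eq_mul]
        have h2 : ∑ i ∈ F \ S, min ((e - indF F') i) (c - 1)
            + ((F \ S) ∩ F').card ≤ c := by
          have hper : ∀ i ∈ F \ S, min ((e - indF F') i) (c - 1)
              + (if i ∈ F' then 1 else 0) ≤ 1 := by
            intro i hi
            have hiS : i ∉ S := (Finset.mem_sdiff.mp hi).2
            have hval : (e - indF F') i = e i - indF F' i := Finsupp.tsub_apply _ _ i
            rw [he i, if_pos hi, if_neg hiS, indF_apply] at hval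
            by_cases hiF' : i ∈ F'
            · rw [if_pos hiF'] at hval ⊢
              omega
            · rw [if_neg hiF'] at hval ⊢
              omega
          calc ∑ i ∈ F \ S, min ((e - indF F') i) (c - 1) + ((F \ S) ∩ F').card
              = ∑ i ∈ F \ S, (min ((e - indF F') i) (c - 1) + (if i ∈ F' then 1 else 0)) := by
                rw [Finset.sum_add_distrib]
                congr 1
                rw [Finset.sum_ite_mem]
                simp
            _ ≤ ∑ i ∈ F \ S, 1 := Finset.sum_le_sum hper
            _ = c := by simp [hcdef]
        have hcomm : ((F \ S) ∩ F').card = (F' ∩ (F \ S)).card := by rw [Finset.inter_comm]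
        omega
      -- conclude
      have hF'S1 : (F' \ S).card = 1 := by rw [Finset.card_sdiff_of_subset hSF', hF'card, hS]
      obtain ⟨r, hr⟩ := Finset.card_eq_one.mp hF'S1
      have hrF'S : r ∈ F' \ S := hr ▸ Finset.mem_singleton_self r
      have hrF' : r ∈ F' := (Finset.mem_sdiff.mp hrF'S).1
      have hrS : r ∉ S := (Finset.mem_sdiff.mp hrF'S).2
      have hrF : r ∈ F := by
        rcases Finset.mem_union.mp (hF'sub hrF') with h | h
        · exact absurd h hrS
        · exact (Finset.mem_sdiff.mp h).1
      have heq : insert r S = F' := by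
        apply Finset.eq_of_subset_of_card_le
        · intro x hx
          rcases Finset.mem_insert.mp hx with h | h
          · exact h ▸ hrF'
          · exact hSF' h
        · rw [hF'card, Finset.card_insert_of_notMem hrS, hS]
      refine ⟨r, hrF, ?_⟩
      rw [heq, hJ]
      exact Ideal.subset_span ⟨F', hF'G, rfl⟩
  · -- (b) → (a)
    intro hb t ht
    have hb' : ∀ F ∈ G, ∀ S : Finset (Fin n), S.card = 2 →
        ∃ r ∈ F, r ∉ S ∧ insert r S ∈ G := by
      intro F hF S hS
      obtain ⟨r, hrF, hmem⟩ := hb F hF S hS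
      rw [prod_X_eq_monomial_indF, hJ', mono_mem_span] at hmem
      obtain ⟨a, ⟨F₀, hF₀, rfl⟩, hle⟩ := hmem
      have hsub : F₀ ⊆ insert r S := indF_le_indF.mp hle
      have hcard : (insert r S).card ≤ 3 := by
        have := Finset.card_insert_le r S
        omega
      have heq : F₀ = insert r S :=
        Finset.eq_of_subset_of_card_le hsub (by rw [hG F₀ hF₀]; exact hcard)
      have hrS : r ∉ S := by
        intro hrS
        have h2 : (insert r S).card = 2 := by rw [Finset.insert_eq_self.mpr hrS]; exact hS
        have h3 := hG F₀ hF₀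
        rw [heq] at h3
        omega
      exact ⟨r, hrF, hrS, heq ▸ hF₀⟩
    apply le_antisymm
    · -- J ⊓ P^t ≤ J * P^(t-1)
      intro p hp
      obtain ⟨hp1, hp2⟩ := Submodule.mem_inf.mp hp
      rw [hJ', mem_ideal_span_monomial_image] at hp1
      rw [sqfreePower_pow, mem_ideal_span_monomial_image] at hp2
      rw [hJ', sqfreePower_pow, span_image_mul, mem_ideal_span_monomial_image]
      intro dd hdd
      obtain ⟨a, ⟨F, hF, rfl⟩, haF⟩ := hp1 dd hdd
      obtain ⟨w, ⟨T, hT, rfl⟩, hwd⟩ := hp2 dd hdd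
      by_cases ht1 : t = 1
      · subst ht1
        refine ⟨indF F + 0, ?_, by simpa using haF⟩
        exact ⟨indF F, ⟨F, hF, rfl⟩, 0, ⟨fun j => j.elim0, fun j => j.elim0, by simp⟩, rfl⟩
      · have ht2 : 2 ≤ t := by omega
        have hM := L2 T hT hwd
        obtain ⟨F', hF'G, hF'd, hrest⟩ := core hG hb' ht2 hF haF hM
        obtain ⟨T', hT'card, hT'le⟩ := L1 (t-1) _ hrest
        refine ⟨indF F' + ∑ j, indF (T' j),
          ⟨indF F', ⟨F', hF'G, rfl⟩, ∑ j, indF (T' j), ⟨T', hT'card, rfl⟩, rfl⟩, ?_⟩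
        calc indF F' + ∑ j, indF (T' j) ≤ indF F' + (dd - indF F') :=
            add_le_add le_rfl hT'le
          _ = dd := add_tsub_cancel_of_le hF'd
    · -- J * P^(t-1) ≤ J ⊓ P^t
      have hJP : J ≤ sqfreePower K n 3 := by
        rw [hJ]
        apply Ideal.span_mono
        rintro p ⟨F, hF, rfl⟩
        exact ⟨F, hG F hF, rfl⟩
      refine le_inf Ideal.mul_le_left ?_
      calc J * sqfreePower K n 3 ^ (t - 1)
          ≤ sqfreePower K n 3 * sqfreePower K n 3 ^ (t - 1) :=
            Ideal.mul_mono_left hJP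
        _ = sqfreePower K n 3 ^ (t - 1 + 1) := (pow_succ' _ _).symm
        _ = sqfreePower K n 3 ^ t := by congr 1; omega
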